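/- Let p: E → [1,∞) be a measurable exponent function on a measurable set E with 1 < p_- ≤ p_+ < ∞, where p_- and p_+ are the essential infimum and supremum of p. If f is measurable on E with ‖f‖_{L^{p(·)}(E)} finite, then ‖|f|^{p(·)−1}‖_{L^{p'(·)}(E)} ≤ ‖f‖_{L^{p(·)}(E)}^{b_*−1}, where b_* = p_- if ‖f‖_{L^{p(·)}(E)} < 1 and b_* = p_+ otherwise. -/

import Mathlib

open MeasureTheory ENNReal

/-- The variable Lebesgue norm `‖f‖_{L^{p(·)}(E)}`. -/
noncomputable def vNorm {d : ℕ} (E : Set (EuclideanSpace ℝ (Fin d)))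
    (p f : EuclideanSpace ℝ (Fin d) → ℝ) : ℝ≥0∞ :=
  sInf {t : ℝ≥0∞ | 0 < t ∧ ∫⁻ x in E, ((‖f x‖₊ : ℝ≥0∞) / t) ^ (p x) ≤ 1}

private lemma div_pt {A μ : ℝ≥0∞} {P b : ℝ} (hP : 1 < P)
    (hmono : μ ^ P ≤ μ ^ ((b - 1) * (P / (P - 1)))) :
    (A ^ (P - 1) / μ ^ (b - 1)) ^ (P / (P - 1)) ≤ (A / μ) ^ P := by
  have hP1 : P - 1 ≠ 0 := by linarith
  have hq : (0:ℝ) ≤ P / (P - 1) := div_nonneg (by linarith) (by linarith)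
  rw [ENNReal.div_rpow_of_nonneg _ _ hq, ENNReal.div_rpow_of_nonneg _ _ (by linarith : (0:ℝ) ≤ P),
    ← ENNReal.rpow_mul, ← ENNReal.rpow_mul]
  have h1 : (P - 1) * (P / (P - 1)) = P := by
    rw [mul_comm]; exact div_mul_cancel₀ _ (sub_ne_zero.mpr hP.ne')
  rw [h1]
  exact ENNReal.div_le_div_left hmono _

/-- If `1 < p₋ ≤ p(·) ≤ p₊ < ∞` and `‖f‖_{L^{p(·)}(E)}` is finite, then
`‖ |f|^{p(·)−1} ‖_{L^{p'(·)}(E)} ≤ ‖f‖_{L^{p(·)}(E)}^{b⁎−1}`, where `b⁎ = p₋` if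
`‖f‖ < 1` and `b⁎ = p₊` otherwise. -/
theorem stmt10 {d : ℕ} (E : Set (EuclideanSpace ℝ (Fin d))) (hE : MeasurableSet E)
    (p : EuclideanSpace ℝ (Fin d) → ℝ) (hpm : Measurable p)
    (pm pM : ℝ) (hpm1 : 1 < pm)
    (hbounds : ∀ᵐ x ∂(volume.restrict E), pm ≤ p x ∧ p x ≤ pM)
    (f : EuclideanSpace ℝ (Fin d) → ℝ) (hf : Measurable f)
    (hfin : vNorm E p f < ⊤) :
    vNorm E (fun x => p x / (p x - 1)) (fun x => |f x| ^ (p x - 1)) ≤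
      (vNorm E p f) ^ ((if vNorm E p f < 1 then pm else pM) - 1) := by
  classical
  by_cases hE0 : volume.restrict E (Set.univ) = 0
  · -- the restricted measure is zero; both norms are zero
    have hzero : volume.restrict E = 0 := Measure.measure_univ_eq_zero.mp hE0
    have hz : vNorm E (fun x => p x / (p x - 1)) (fun x => |f x| ^ (p x - 1)) = 0 := by
      refine le_antisymm ?_ zero_le
      refine le_of_forall_gt_imp_ge_of_dense fun w hw => ?_
      refine sInf_le ⟨hw, ?_⟩
      rw [hzero]
      simp
    rw [hz]
    exact zero_le
  have hne : (volume.restrict E) ≠ 0 := fun h => hE0 (by rw [h]; rfl)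
  have hNB : (MeasureTheory.ae (volume.restrict E)).NeBot := ae_neBot.mpr hne
  set v : ℝ≥0∞ := vNorm E p f with hv
  set b : ℝ := (if v < 1 then pm else pM) with hbdef
  have hb1 : 1 < b := by
    rw [hbdef]
    split_ifs with h1
    · exact hpm1
    · obtain ⟨x, hx1, hx2⟩ := hbounds.exists
      linarith
  have hc : (0:ℝ) < b - 1 := by linarith
  -- the main estimate
  have main : ∀ μ : ℝ≥0∞, 0 < μ → μ ≠ ⊤ → v < μ →
      ((v < 1 → μ ≤ 1) ∧ (¬ v < 1 → 1 ≤ μ)) →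
      vNorm E (fun x => p x / (p x - 1)) (fun x => |f x| ^ (p x - 1)) ≤ μ ^ (b - 1) := by
    intro μ hμ0 hμt hvμ hμcase
    have hvμ' : sInf {t : ℝ≥0∞ | 0 < t ∧ ∫⁻ x in E, ((‖f x‖₊ : ℝ≥0∞) / t) ^ (p x) ≤ 1} < μ := hvμ
    obtain ⟨s, ⟨hs0, hsint⟩, hsμ⟩ := sInf_lt_iff.mp hvμ'
    have hint1 : ∫⁻ x in E, ((‖f x‖₊ : ℝ≥0∞) / μ) ^ (p x) ≤ 1 := by
      refine le_trans (lintegral_mono_ae ?_) hsint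
      filter_upwards [hbounds] with x hx
      exact ENNReal.rpow_le_rpow (ENNReal.div_le_div_left hsμ.le _) (by linarith [hx.1])
    unfold vNorm
    refine sInf_le ⟨ENNReal.rpow_pos hμ0 hμt, ?_⟩
    refine le_trans (lintegral_mono_ae ?_) hint1
    filter_upwards [hbounds] with x hx
    have hP : 1 < p x := lt_of_lt_of_le hpm1 hx.1
    have hA : ((‖|f x| ^ (p x - 1)‖₊ : ℝ≥0∞)) = ((‖f x‖₊ : ℝ≥0∞)) ^ (p x - 1) := by
      rw [← ENNReal.ofReal_coe_nnreal, ← ENNReal.ofReal_coe_nnreal, coe_nnnorm, coe_nnnorm, Real.norm_eq_abs,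
        Real.norm_eq_abs, abs_of_nonneg (Real.rpow_nonneg (abs_nonneg _) _)]
      exact (ENNReal.ofReal_rpow_of_nonneg (abs_nonneg _) (by linarith : (0:ℝ) ≤ p x - 1)).symm
    rw [hA]
    refine div_pt hP ?_
    have hq0 : (0:ℝ) < p x / (p x - 1) := div_pos (by linarith) (by linarith)
    have hkey : (p x - 1) * (p x / (p x - 1)) = p x := by
      rw [mul_comm]; exact div_mul_cancel₀ _ (sub_ne_zero.mpr hP.ne')
    rcases lt_or_ge v 1 with h1 | h1
    · have hb' : b = pm := by rw [hbdef, if_pos h1]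
      have hμ1 : μ ≤ 1 := hμcase.1 h1
      have hle : (b - 1) * (p x / (p x - 1)) ≤ p x := by
        calc (b - 1) * (p x / (p x - 1)) ≤ (p x - 1) * (p x / (p x - 1)) :=
              mul_le_mul_of_nonneg_right (by rw [hb']; linarith [hx.1]) hq0.le
          _ = p x := hkey
      exact ENNReal.rpow_le_rpow_of_exponent_ge hμ1 hle
    · have hb' : b = pM := by rw [hbdef, if_neg (not_lt.mpr h1)]
      have hμ1 : 1 ≤ μ := hμcase.2 (not_lt.mpr h1)
      have hle : p x ≤ (b - 1) * (p x / (p x - 1)) := by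
        calc p x = (p x - 1) * (p x / (p x - 1)) := hkey.symm
          _ ≤ (b - 1) * (p x / (p x - 1)) :=
              mul_le_mul_of_nonneg_right (by rw [hb']; linarith [hx.2]) hq0.le
      exact ENNReal.rpow_le_rpow_of_exponent_le hμ1 hle
  -- pass to the limit μ ↓ v
  show vNorm E (fun x => p x / (p x - 1)) (fun x => |f x| ^ (p x - 1)) ≤ v ^ (b - 1)
  refine le_of_forall_gt_imp_ge_of_dense fun w hw => ?_
  by_cases hwt : w = ⊤
  · rw [hwt]; exact le_top
  have hw0 : 0 < w := lt_of_le_of_lt zero_le hw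
  have hμdef : v < w ^ (1 / (b - 1)) := by
    have h2 : (v ^ (b - 1)) ^ (1 / (b - 1)) < w ^ (1 / (b - 1)) :=
      ENNReal.rpow_lt_rpow hw (by positivity)
    rwa [← ENNReal.rpow_mul, mul_one_div_cancel hc.ne', ENNReal.rpow_one] at h2
  have hwc : (w ^ (1 / (b - 1))) ^ (b - 1) = w := by
    rw [← ENNReal.rpow_mul, one_div_mul_cancel hc.ne', ENNReal.rpow_one]
  rcases lt_or_ge v 1 with h1 | h1
  · -- use μ = min (w ^ (1/(b-1))) 1
    set μ : ℝ≥0∞ := min (w ^ (1 / (b - 1))) 1 with hμ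
    have hμ0 : 0 < μ := lt_min (ENNReal.rpow_pos hw0 hwt) zero_lt_one
    have hμt : μ ≠ ⊤ := (lt_of_le_of_lt (min_le_right _ _) ENNReal.one_lt_top).ne
    have hvlt : v < μ := lt_min hμdef h1
    have := main μ hμ0 hμt hvlt ⟨fun _ => min_le_right _ _, fun h => absurd h1 h⟩
    refine le_trans this ?_
    calc μ ^ (b - 1) ≤ (w ^ (1 / (b - 1))) ^ (b - 1) :=
          ENNReal.rpow_le_rpow (min_le_left _ _) hc.le
      _ = w := hwc
  · -- use μ = w ^ (1/(b-1))
    set μ : ℝ≥0∞ := w ^ (1 / (b - 1)) with hμ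
    have hμ0 : 0 < μ := ENNReal.rpow_pos hw0 hwt
    have hμt : μ ≠ ⊤ := (ENNReal.rpow_lt_top_of_nonneg (by positivity) hwt).ne
    have hvlt : v < μ := hμdef
    have := main μ hμ0 hμt hvlt
      ⟨fun h => absurd h (not_lt.mpr h1), fun _ => le_trans h1 hvlt.le⟩
    exact le_trans this hwc.le
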